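/- Let R be a commutative ring and L a flat R-module whose second exterior power vanishes: Λ²_R L = 0. Then for every integer p > 0: (a) every permutation σ in the symmetric group S_p acts as the identity on the p-fold tensor power L^{⊗p} = L ⊗_R ⋯ ⊗_R L (so that, in particular, the divided power module Γ^p(L) is canonically isomorphic to L^{⊗p}); (b) for every R-module N, the reordering isomorphism L^{⊗p} ⊗_R N^{⊗p} ≅ (L ⊗_R N)^{⊗p} followed by the canonical projection (L ⊗_R N)^{⊗p} → Sym^p_R(L ⊗_R N) descends to an isomorphism L^{⊗p} ⊗_R Sym^p_R(N) ≅ Sym^p_R(L ⊗_R N); (c) likewise it descends to an isomorphism L^{⊗p} ⊗_R Λ^p_R(N) ≅ Λ^p_R(L ⊗_R N). -/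

import Mathlib

set_option maxHeartbeats 1000000
set_option synthInstance.maxHeartbeats 100000


open scoped TensorProduct

/-- The submodule of the `p`-th tensor power of `M` spanned by the differences
`t - σ·t` for permutations `σ ∈ S_p`; the quotient by it is the `p`-th symmetric power
`Sym^p_R(M)`. -/
def symRelations (R : Type*) [CommRing R] (M : Type*) [AddCommGroup M] [Module R M]
    (p : ℕ) : Submodule R (⨂[R]^p M) :=
  Submodule.span R
    {x | ∃ (σ : Equiv.Perm (Fin p)) (t : ⨂[R]^p M),
      x = t - PiTensorProduct.reindex R (fun _ => M) σ t}

/-- The canonical projection from the `p`-th tensor power onto the `p`-th exterior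
power. -/
noncomputable def tensorPowerToExteriorPower (R : Type*) [CommRing R]
    (M : Type*) [AddCommGroup M] [Module R M] (p : ℕ) :
    (⨂[R]^p M) →ₗ[R] ⋀[R]^p M :=
  LinearMap.codRestrict (⋀[R]^p M)
    (PiTensorProduct.lift (ExteriorAlgebra.ιMulti R p).toMultilinearMap)
    (by
      intro x
      induction x using PiTensorProduct.induction_on with
      | smul_tprod r f =>
          rw [map_smul]
          refine Submodule.smul_mem _ _ ?_
          simpa [PiTensorProduct.lift.tprod] using
            ExteriorAlgebra.ιMulti_range R p ⟨f, rfl⟩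
      | add a b ha hb =>
          rw [map_add]; exact Submodule.add_mem _ ha hb)


open PiTensorProduct

namespace Statement18Aux

variable {R : Type*} [CommRing R]

/-- A bilinear map vanishing on the diagonal, packaged as an alternating map. -/
def binAlt {L T : Type*} [AddCommGroup L] [Module R L] [AddCommGroup T] [Module R T]
    (B : L →ₗ[R] L →ₗ[R] T) (h : ∀ x, B x x = 0) : L [⋀^Fin 2]→ₗ[R] T where
  toFun v := B (v 0) (v 1)
  map_update_add' {dec} m i x y := by
    rw [Subsingleton.elim dec (by clear dec; infer_instance)]
    have h01 : (0 : Fin 2) ≠ 1 := Fin.ne_of_val_ne (by norm_num)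
    have h10 : (1 : Fin 2) ≠ 0 := Fin.ne_of_val_ne (by norm_num)
    fin_cases i <;>
      simp [Function.update_self, Function.update_of_ne, h01, h10]
  map_update_smul' {dec} m i c x := by
    rw [Subsingleton.elim dec (by clear dec; infer_instance)]
    have h01 : (0 : Fin 2) ≠ 1 := Fin.ne_of_val_ne (by norm_num)
    have h10 : (1 : Fin 2) ≠ 0 := Fin.ne_of_val_ne (by norm_num)
    fin_cases i <;>
      simp [Function.update_self, Function.update_of_ne, h01, h10]
  map_eq_zero_of_eq' v i j hv hij := by
    fin_cases i <;> fin_cases j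
    · exact absurd rfl hij
    · show B (v 0) (v 1) = 0
      rw [show v 0 = v 1 from hv]; exact h _
    · show B (v 0) (v 1) = 0
      rw [show v 1 = v 0 from hv]; exact h _
    · exact absurd rfl hij

theorem alt_bilin_zero {L T : Type*} [AddCommGroup L] [Module R L] [AddCommGroup T] [Module R T]
    (hΛ : (⋀[R]^2 L : Submodule R (ExteriorAlgebra R L)) = ⊥)
    (B : L →ₗ[R] L →ₗ[R] T) (h : ∀ x, B x x = 0) (a b : L) : B a b = 0 := by
  classical
  set F : ∀ i, L [⋀^Fin i]→ₗ[R] T := Function.update (fun _ => 0) 2 (binAlt B h) with hF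
  have hmem : ExteriorAlgebra.ιMulti R 2 ![a, b] ∈ (⋀[R]^2 L : Submodule R (ExteriorAlgebra R L)) :=
    ExteriorAlgebra.ιMulti_range R 2 ⟨![a, b], rfl⟩
  rw [hΛ, Submodule.mem_bot] at hmem
  have h1 : ExteriorAlgebra.liftAlternating F (ExteriorAlgebra.ιMulti R 2 ![a, b]) = B a b := by
    rw [ExteriorAlgebra.liftAlternating_apply_ιMulti, hF, Function.update_self]
    simp [binAlt]
  rw [hmem] at h1
  simpa using h1.symm

variable {L : Type*} [AddCommGroup L] [Module R L]

theorem tmul_comm (hΛ : (⋀[R]^2 L : Submodule R (ExteriorAlgebra R L)) = ⊥) (x y : L) :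
    x ⊗ₜ[R] y = y ⊗ₜ[R] x := by
  have h := alt_bilin_zero hΛ
    (LinearMap.mk₂ R (fun a b => a ⊗ₜ[R] b - b ⊗ₜ[R] a)
      (fun a a' b => by simp [TensorProduct.add_tmul, TensorProduct.tmul_add]; abel)
      (fun c a b => by simp [TensorProduct.smul_tmul', TensorProduct.tmul_smul, smul_sub])
      (fun a b b' => by simp [TensorProduct.add_tmul, TensorProduct.tmul_add]; abel)
      (fun c a b => by simp [TensorProduct.smul_tmul', TensorProduct.tmul_smul, smul_sub]))
    (fun a => by simp) x y
  simp only [LinearMap.mk₂_apply] at h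
  exact sub_eq_zero.mp h

theorem bilin_symm (hΛ : (⋀[R]^2 L : Submodule R (ExteriorAlgebra R L)) = ⊥)
    {T : Type*} [AddCommGroup T] [Module R T]
    (B : L →ₗ[R] L →ₗ[R] T) (x y : L) : B x y = B y x := by
  have := congrArg (TensorProduct.lift B) (tmul_comm hΛ x y)
  simpa using this

end Statement18Aux

namespace Statement18Aux

variable {R : Type*} [CommRing R] {L : Type*} [AddCommGroup L] [Module R L]

theorem tprod_update_comm (hΛ : (⋀[R]^2 L : Submodule R (ExteriorAlgebra R L)) = ⊥)
    {p : ℕ} (f : Fin p → L) {i j : Fin p} (hij : i ≠ j) (x y : L) :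
    tprod R (Function.update (Function.update f i x) j y) =
      tprod R (Function.update (Function.update f i y) j x) := by
  classical
  have hcomm : ∀ (a : L) (b : L),
      Function.update (Function.update f i a) j b =
        Function.update (Function.update f j b) i a := fun a b =>
    Function.update_comm hij a b f
  set B : L →ₗ[R] L →ₗ[R] ⨂[R]^p L := LinearMap.mk₂ R
    (fun a b => tprod R (Function.update (Function.update f i a) j b))
    (fun a a' b => by
      rw [hcomm (a + a') b, hcomm a b, hcomm a' b]
      exact MultilinearMap.map_update_add _ _ _ _ _)
    (fun c a b => by
      rw [hcomm (c • a) b, hcomm a b]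
      exact MultilinearMap.map_update_smul _ _ _ _ _)
    (fun a b b' => MultilinearMap.map_update_add _ _ _ _ _)
    (fun c a b => MultilinearMap.map_update_smul _ _ _ _ _) with hB
  have := bilin_symm hΛ B x y
  simpa [hB] using this

theorem reindex_perm_id (hΛ : (⋀[R]^2 L : Submodule R (ExteriorAlgebra R L)) = ⊥)
    {p : ℕ} (σ : Equiv.Perm (Fin p)) (x : ⨂[R]^p L) :
    PiTensorProduct.reindex R (fun _ => L) σ x = x := by
  classical
  -- first, transpositions
  have hswap : ∀ (i j : Fin p), ∀ x : ⨂[R]^p L,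
      PiTensorProduct.reindex R (fun _ => L) (Equiv.swap i j) x = x := by
    intro i j x
    rcases eq_or_ne i j with rfl | hij
    · rw [Equiv.swap_self]
      rw [show (Equiv.refl (Fin p)) = Equiv.refl (Fin p) from rfl, reindex_refl]
      rfl
    · induction x using PiTensorProduct.induction_on with
      | smul_tprod r f =>
          rw [map_smul]
          congr 1
          rw [reindex_tprod]
          have h1 : (fun k => f ((Equiv.swap i j).symm k)) =
              Function.update (Function.update f i (f j)) j (f i) := by
            funext k
            rcases eq_or_ne k i with rfl | hki
            · rw [Equiv.symm_swap, Equiv.swap_apply_left,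
                Function.update_of_ne hij, Function.update_self]
            · rcases eq_or_ne k j with rfl | hkj
              · rw [Equiv.symm_swap, Equiv.swap_apply_right, Function.update_self]
              · rw [Equiv.symm_swap, Equiv.swap_apply_of_ne_of_ne hki hkj,
                  Function.update_of_ne hkj, Function.update_of_ne hki]
          have h2 : f = Function.update (Function.update f i (f i)) j (f j) := by
            rw [Function.update_eq_self, Function.update_eq_self]
          rw [h1, tprod_update_comm hΛ f hij (f j) (f i)]
          conv_rhs => rw [h2]
      | add a b ha hb => rw [map_add, ha, hb]
  revert x
  refine Equiv.Perm.swap_induction_on σ ?_ ?_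
  · intro x
    rw [show ((1 : Equiv.Perm (Fin p)) : Fin p ≃ Fin p) = Equiv.refl (Fin p) from rfl,
      reindex_refl]
    rfl
  · intro τ i j hij ih x
    have hm : (Equiv.swap i j * τ : Equiv.Perm (Fin p)) = τ.trans (Equiv.swap i j) := rfl
    rw [hm, ← reindex_reindex, ih, hswap]

end Statement18Aux

namespace Statement18Aux

variable {R : Type*} [CommRing R]

section Cons

variable (R) (M : Type*) [AddCommGroup M] [Module R M] (p : ℕ)

/-- `⨂^(p+1) M ≃ M ⊗ ⨂^p M`, peeling off the first factor. -/
noncomputable def consEquiv : (M ⊗[R] ⨂[R]^p M) ≃ₗ[R] ⨂[R]^(p+1) M := by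
  refine LinearEquiv.ofLinear
    (TensorProduct.lift ((PiTensorProduct.lift :
        MultilinearMap R (fun _ : Fin p => M) (⨂[R]^(p+1) M) ≃ₗ[R] _).toLinearMap ∘ₗ
      (tprod R (s := fun _ : Fin (p+1) => M)).curryLeft))
    (PiTensorProduct.lift (LinearMap.uncurryLeft
      ({ toFun := fun m => (TensorProduct.mk R M (⨂[R]^p M) m).compMultilinearMap (tprod R)
         map_add' := fun m m' => by
           ext g
           simp [TensorProduct.add_tmul]
         map_smul' := fun c m => by
           ext g
           simp [TensorProduct.smul_tmul'] } :
        M →ₗ[R] MultilinearMap R (fun _ : Fin p => M) (M ⊗[R] ⨂[R]^p M))))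
    ?_ ?_
  · apply PiTensorProduct.ext
    apply MultilinearMap.ext
    intro v
    simp only [LinearMap.compMultilinearMap_apply, LinearMap.coe_comp, Function.comp_apply,
      PiTensorProduct.lift.tprod, LinearMap.uncurryLeft_apply, LinearMap.coe_mk, AddHom.coe_mk,
      MultilinearMap.coe_mk, TensorProduct.mk_apply, LinearMap.id_coe, id_eq]
    rw [TensorProduct.lift.tmul]
    simp only [LinearMap.coe_comp, Function.comp_apply, LinearEquiv.coe_coe]
    rw [PiTensorProduct.lift.tprod]
    rw [MultilinearMap.curryLeft_apply]
    rw [Fin.cons_self_tail]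
  · apply TensorProduct.ext
    apply LinearMap.ext; intro m
    apply PiTensorProduct.ext
    apply MultilinearMap.ext
    intro g
    simp only [LinearMap.compr₂_apply, LinearMap.compr₂ₛₗ_apply, TensorProduct.mk_apply, LinearMap.coe_comp,
      Function.comp_apply, LinearMap.compMultilinearMap_apply, PiTensorProduct.lift.tprod]
    rw [TensorProduct.lift.tmul]
    simp only [LinearMap.coe_comp, Function.comp_apply, LinearEquiv.coe_coe]
    rw [PiTensorProduct.lift.tprod, MultilinearMap.curryLeft_apply]
    rw [PiTensorProduct.lift.tprod]
    simp [Fin.tail_cons]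

theorem consEquiv_tmul (m : M) (g : Fin p → M) :
    consEquiv R M p (m ⊗ₜ[R] tprod R g) = PiTensorProduct.tprod R (Fin.cons m g) := by
  simp only [consEquiv, LinearEquiv.ofLinear_apply]
  rw [TensorProduct.lift.tmul]
  simp only [LinearMap.coe_comp, Function.comp_apply, LinearEquiv.coe_coe]
  rw [PiTensorProduct.lift.tprod, MultilinearMap.curryLeft_apply]

theorem consEquiv_symm_tprod (v : Fin (p+1) → M) :
    (consEquiv R M p).symm (tprod R v) = v 0 ⊗ₜ[R] tprod R (Fin.tail v) := by
  rw [LinearEquiv.symm_apply_eq, consEquiv_tmul, Fin.cons_self_tail]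

end Cons

end Statement18Aux

namespace Statement18Aux

variable {R : Type*} [CommRing R]

theorem tensor_pipi_ext {A B P : Type*} [AddCommGroup A] [Module R A]
    [AddCommGroup B] [Module R B] [AddCommGroup P] [Module R P] {p q : ℕ}
    {φ ψ : ((⨂[R]^p A) ⊗[R] (⨂[R]^q B)) →ₗ[R] P}
    (h : ∀ (f : Fin p → A) (n : Fin q → B),
      φ (tprod R f ⊗ₜ[R] tprod R n) = ψ (tprod R f ⊗ₜ[R] tprod R n)) : φ = ψ := by
  apply TensorProduct.ext
  apply PiTensorProduct.ext
  apply MultilinearMap.ext; intro f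
  apply PiTensorProduct.ext
  apply MultilinearMap.ext; intro n
  simpa using h f n

section Distrib

variable (R) (L N : Type*) [AddCommGroup L] [Module R L] [AddCommGroup N] [Module R N]

/-- Distributivity of tensor powers over a binary tensor product, with its
characterizing property on pure tensors. -/
noncomputable def distrib : ∀ p : ℕ,
    {e : ((⨂[R]^p L) ⊗[R] (⨂[R]^p N)) ≃ₗ[R] ⨂[R]^p (L ⊗[R] N) //
      ∀ (f : Fin p → L) (n : Fin p → N),
        e (tprod R f ⊗ₜ[R] tprod R n) = tprod R (fun i => f i ⊗ₜ[R] n i)}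
  | 0 =>
    ⟨(TensorProduct.congr (PiTensorProduct.isEmptyEquiv (Fin 0))
        (PiTensorProduct.isEmptyEquiv (Fin 0))).trans
      ((TensorProduct.lid R R).trans (PiTensorProduct.isEmptyEquiv (Fin 0)).symm), by
      intro f n
      simp only [LinearEquiv.trans_apply, TensorProduct.congr_tmul,
        PiTensorProduct.isEmptyEquiv_apply_tprod, TensorProduct.lid_tmul, one_smul]
      rw [LinearEquiv.symm_apply_eq, PiTensorProduct.isEmptyEquiv_apply_tprod]⟩
  | (p+1) =>
    ⟨(TensorProduct.congr (consEquiv R L p).symm (consEquiv R N p).symm).trans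
      ((TensorProduct.tensorTensorTensorComm R L (⨂[R]^p L) N (⨂[R]^p N)).trans
        ((TensorProduct.congr (LinearEquiv.refl R (L ⊗[R] N)) (distrib p).1).trans
          (consEquiv R (L ⊗[R] N) p))), by
      intro f n
      simp only [LinearEquiv.trans_apply, TensorProduct.congr_tmul,
        consEquiv_symm_tprod, TensorProduct.tensorTensorTensorComm_tmul,
        LinearEquiv.refl_apply, (distrib p).2, consEquiv_tmul]
      congr 1
      funext i
      refine Fin.cases ?_ (fun i => ?_) i
      · simp [Fin.cons_zero]
      · simp [Fin.cons_succ, Fin.tail]⟩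

end Distrib

end Statement18Aux

namespace Statement18Aux

variable {R : Type*} [CommRing R] {L : Type*} [AddCommGroup L] [Module R L]
variable (hΛ : (⋀[R]^2 L : Submodule R (ExteriorAlgebra R L)) = ⊥)
variable {N : Type*} [AddCommGroup N] [Module R N] {p : ℕ}

section Main

variable (R L N p)

theorem map₂_eq_distrib (x : ⨂[R]^p L) (t : ⨂[R]^p N) :
    PiTensorProduct.map₂ (fun _ => TensorProduct.mk R L N) x t =
      (distrib R L N p).1 (x ⊗ₜ[R] t) := by
  have h : TensorProduct.lift (PiTensorProduct.map₂ (fun _ => TensorProduct.mk R L N)) =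
      ((distrib R L N p).1 : _ ≃ₗ[R] _).toLinearMap := by
    apply tensor_pipi_ext
    intro f n
    rw [TensorProduct.lift.tmul, PiTensorProduct.map₂_tprod_tprod]
    rw [LinearEquiv.coe_coe, (distrib R L N p).2]
    rfl
  rw [← TensorProduct.lift.tmul, h]
  rfl

variable {R L N p}

theorem distrib_reindex (hΛ : (⋀[R]^2 L : Submodule R (ExteriorAlgebra R L)) = ⊥)
    (σ : Equiv.Perm (Fin p)) (w : (⨂[R]^p L) ⊗[R] (⨂[R]^p N)) :
    (distrib R L N p).1
        (TensorProduct.map LinearMap.id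
          (PiTensorProduct.reindex R (fun _ => N) σ).toLinearMap w) =
      PiTensorProduct.reindex R (fun _ => L ⊗[R] N) σ ((distrib R L N p).1 w) := by
  have h : ((distrib R L N p).1.toLinearMap ∘ₗ
      TensorProduct.map LinearMap.id (PiTensorProduct.reindex R (fun _ => N) σ).toLinearMap) =
      ((PiTensorProduct.reindex R (fun _ => L ⊗[R] N) σ).toLinearMap ∘ₗ
        (distrib R L N p).1.toLinearMap) := by
    apply tensor_pipi_ext
    intro f n
    simp only [LinearMap.coe_comp, Function.comp_apply, TensorProduct.map_tmul,
      LinearMap.id_coe, id_eq, LinearEquiv.coe_coe]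
    have hL' : tprod R (fun i => f (σ.symm i)) = tprod R f := by
      have h1 := reindex_perm_id hΛ σ (tprod R f)
      rwa [PiTensorProduct.reindex_tprod] at h1
    rw [PiTensorProduct.reindex_tprod]
    conv_rhs => rw [(distrib R L N p).2, PiTensorProduct.reindex_tprod]
    conv_lhs => rw [← hL', (distrib R L N p).2]
  exact LinearMap.congr_fun h w

theorem distrib_symm_reindex (hΛ : (⋀[R]^2 L : Submodule R (ExteriorAlgebra R L)) = ⊥)
    (σ : Equiv.Perm (Fin p)) (u : ⨂[R]^p (L ⊗[R] N)) :
    (distrib R L N p).1.symm (PiTensorProduct.reindex R (fun _ => L ⊗[R] N) σ u) =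
      TensorProduct.map LinearMap.id
        (PiTensorProduct.reindex R (fun _ => N) σ).toLinearMap
        ((distrib R L N p).1.symm u) := by
  rw [LinearEquiv.symm_apply_eq, distrib_reindex hΛ σ, LinearEquiv.apply_symm_apply]

theorem mkQ_reindex {M : Type*} [AddCommGroup M] [Module R M] (σ : Equiv.Perm (Fin p))
    (t : ⨂[R]^p M) :
    Submodule.Quotient.mk (p := symRelations R M p)
        (PiTensorProduct.reindex R (fun _ => M) σ t) =
      (Submodule.Quotient.mk t : (⨂[R]^p M) ⧸ symRelations R M p) := by
  rw [Submodule.Quotient.eq]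
  rw [show PiTensorProduct.reindex R (fun _ => M) σ t - t =
      -(t - PiTensorProduct.reindex R (fun _ => M) σ t) from (neg_sub _ _).symm]
  exact Submodule.neg_mem _ (Submodule.subset_span ⟨σ, t, rfl⟩)

end Main

end Statement18Aux

namespace Statement18Aux

variable {R : Type*} [CommRing R] {L : Type*} [AddCommGroup L] [Module R L]
variable {N : Type*} [AddCommGroup N] [Module R N] {p : ℕ}

theorem part_b (hΛ : (⋀[R]^2 L : Submodule R (ExteriorAlgebra R L)) = ⊥)
    (N : Type*) [AddCommGroup N] [Module R N] (p : ℕ) :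
    ∃ e : ((⨂[R]^p L) ⊗[R] ((⨂[R]^p N) ⧸ symRelations R N p)) ≃ₗ[R]
        ((⨂[R]^p (L ⊗[R] N)) ⧸ symRelations R (L ⊗[R] N) p),
      ∀ (x : ⨂[R]^p L) (t : ⨂[R]^p N),
        e (x ⊗ₜ[R] Submodule.Quotient.mk t) =
          Submodule.Quotient.mk
            (PiTensorProduct.map₂ (fun _ => TensorProduct.mk R L N) x t) := by
  classical
  set D := (distrib R L N p).1 with hD
  have hmap₂ := map₂_eq_distrib R L N p
  -- the forward map
  have hker : ∀ x : ⨂[R]^p L, symRelations R N p ≤ LinearMap.ker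
      ((Submodule.mkQ (symRelations R (L ⊗[R] N) p)) ∘ₗ
        (PiTensorProduct.map₂ (fun _ => TensorProduct.mk R L N) x)) := by
    intro x
    rw [symRelations, Submodule.span_le]
    rintro z ⟨σ, t, rfl⟩
    simp only [SetLike.mem_coe, LinearMap.mem_ker, LinearMap.comp_apply, map_sub]
    have h1 : PiTensorProduct.map₂ (fun _ => TensorProduct.mk R L N) x
        (PiTensorProduct.reindex R (fun _ => N) σ t) =
        PiTensorProduct.reindex R (fun _ => L ⊗[R] N) σ
          (PiTensorProduct.map₂ (fun _ => TensorProduct.mk R L N) x t) := by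
      rw [hmap₂, hmap₂, ← distrib_reindex hΛ σ]
      exact congrArg _ (by simp [TensorProduct.map_tmul])
    rw [h1]
    rw [sub_eq_zero]
    simp only [Submodule.mkQ_apply]
    exact (mkQ_reindex σ _).symm
  set B₁ : (⨂[R]^p L) →ₗ[R] ((⨂[R]^p N) ⧸ symRelations R N p) →ₗ[R]
      ((⨂[R]^p (L ⊗[R] N)) ⧸ symRelations R (L ⊗[R] N) p) :=
    { toFun := fun x => Submodule.liftQ _
        ((Submodule.mkQ (symRelations R (L ⊗[R] N) p)) ∘ₗ
          (PiTensorProduct.map₂ (fun _ => TensorProduct.mk R L N) x)) (hker x)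
      map_add' := fun x y => by
        apply Submodule.linearMap_qext
        rw [Submodule.liftQ_mkQ, LinearMap.add_comp, Submodule.liftQ_mkQ,
          Submodule.liftQ_mkQ, map_add, LinearMap.comp_add]
      map_smul' := fun c x => by
        apply Submodule.linearMap_qext
        rw [Submodule.liftQ_mkQ, RingHom.id_apply, LinearMap.smul_comp,
          Submodule.liftQ_mkQ, map_smul, LinearMap.comp_smul] } with hB₁
  set Fb := TensorProduct.lift B₁ with hFb
  have hFb_apply : ∀ (x : ⨂[R]^p L) (t : ⨂[R]^p N),
      Fb (x ⊗ₜ[R] Submodule.Quotient.mk t) =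
        Submodule.Quotient.mk
          (PiTensorProduct.map₂ (fun _ => TensorProduct.mk R L N) x t) := by
    intro x t
    rw [hFb, TensorProduct.lift.tmul, hB₁]
    simp only [LinearMap.coe_mk, AddHom.coe_mk]
    rw [show (Submodule.Quotient.mk t : (⨂[R]^p N) ⧸ symRelations R N p) =
      Submodule.mkQ _ t from rfl, Submodule.mkQ_apply, Submodule.liftQ_apply,
      LinearMap.comp_apply, Submodule.mkQ_apply]
  -- the backward map
  set g0 : (⨂[R]^p (L ⊗[R] N)) →ₗ[R]
      ((⨂[R]^p L) ⊗[R] ((⨂[R]^p N) ⧸ symRelations R N p)) :=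
    (LinearMap.lTensor (⨂[R]^p L) (Submodule.mkQ (symRelations R N p))) ∘ₗ
      D.symm.toLinearMap with hg0
  have hg0reindex : ∀ (σ : Equiv.Perm (Fin p)) (u : ⨂[R]^p (L ⊗[R] N)),
      g0 (PiTensorProduct.reindex R (fun _ => L ⊗[R] N) σ u) = g0 u := by
    intro σ u
    rw [hg0]
    simp only [LinearMap.comp_apply, LinearEquiv.coe_coe]
    rw [hD, distrib_symm_reindex hΛ σ u, ← hD]
    rw [show TensorProduct.map LinearMap.id
        (PiTensorProduct.reindex R (fun _ => N) σ).toLinearMap =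
      LinearMap.lTensor (⨂[R]^p L)
        (PiTensorProduct.reindex R (fun _ => N) σ).toLinearMap from rfl]
    rw [← LinearMap.comp_apply, ← LinearMap.lTensor_comp]
    congr 2
    apply LinearMap.ext
    intro t
    simp only [LinearMap.comp_apply, LinearEquiv.coe_coe, Submodule.mkQ_apply]
    exact mkQ_reindex σ t
  have hgker : symRelations R (L ⊗[R] N) p ≤ LinearMap.ker g0 := by
    rw [symRelations, Submodule.span_le]
    rintro z ⟨σ, u, rfl⟩
    simp only [SetLike.mem_coe, LinearMap.mem_ker, map_sub, hg0reindex σ u, sub_self]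
  set Gb := Submodule.liftQ _ g0 hgker with hGb
  -- key compatibility
  have hkey : Fb ∘ₗ (LinearMap.lTensor (⨂[R]^p L) (Submodule.mkQ (symRelations R N p))) =
      (Submodule.mkQ (symRelations R (L ⊗[R] N) p)) ∘ₗ D.toLinearMap := by
    apply tensor_pipi_ext
    intro f n
    simp only [LinearMap.comp_apply, LinearMap.lTensor_tmul, Submodule.mkQ_apply,
      LinearEquiv.coe_coe]
    rw [hFb_apply, hmap₂, hD]
  have h₁ : Fb ∘ₗ Gb = LinearMap.id := by
    apply Submodule.linearMap_qext
    apply LinearMap.ext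
    intro u
    simp only [LinearMap.comp_apply, Submodule.mkQ_apply, LinearMap.id_apply]
    rw [hGb, Submodule.liftQ_apply, hg0]
    simp only [LinearMap.comp_apply, LinearEquiv.coe_coe]
    have := LinearMap.congr_fun hkey (D.symm u)
    simp only [LinearMap.comp_apply, LinearEquiv.coe_coe] at this
    rw [this, LinearEquiv.apply_symm_apply, Submodule.mkQ_apply]
  have h₂ : Gb ∘ₗ Fb = LinearMap.id := by
    apply TensorProduct.ext'
    intro x q
    obtain ⟨t, rfl⟩ := Submodule.mkQ_surjective _ q
    simp only [LinearMap.comp_apply, LinearMap.id_apply, Submodule.mkQ_apply]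
    rw [hFb_apply, hGb, Submodule.liftQ_apply, hg0]
    simp only [LinearMap.comp_apply, LinearEquiv.coe_coe]
    rw [hmap₂, hD, LinearEquiv.symm_apply_apply, LinearMap.lTensor_tmul,
      Submodule.mkQ_apply]
  exact ⟨LinearEquiv.ofLinear Fb Gb h₁ h₂, fun x t => hFb_apply x t⟩

end Statement18Aux

namespace Statement18Aux

variable {R : Type*} [CommRing R]

section ExtHelpers

variable {M T : Type*} [AddCommGroup M] [Module R M] [AddCommGroup T] [Module R T] {p : ℕ}

theorem tP2E_coe (u : ⨂[R]^p M) :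
    (tensorPowerToExteriorPower R M p u : ExteriorAlgebra R M) =
      PiTensorProduct.lift (ExteriorAlgebra.ιMulti R p).toMultilinearMap u := rfl

theorem tP2E_tprod_coe (v : Fin p → M) :
    (tensorPowerToExteriorPower R M p (tprod R v) : ExteriorAlgebra R M) =
      ExteriorAlgebra.ιMulti R p v := by
  rw [tP2E_coe, PiTensorProduct.lift.tprod]; rfl

/-- Linear map out of the exterior power submodule induced by an alternating map. -/
noncomputable def altLift (A : M [⋀^Fin p]→ₗ[R] T) : (⋀[R]^p M : Submodule R _) →ₗ[R] T :=
  (ExteriorAlgebra.liftAlternating (Function.update (fun _ => 0) p A)) ∘ₗ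
    (Submodule.subtype _)

theorem altLift_tP2E_tprod (A : M [⋀^Fin p]→ₗ[R] T) (v : Fin p → M) :
    altLift A (tensorPowerToExteriorPower R M p (tprod R v)) = A v := by
  classical
  have : altLift A (tensorPowerToExteriorPower R M p (tprod R v)) =
      ExteriorAlgebra.liftAlternating (Function.update (fun _ => 0) p A)
        (ExteriorAlgebra.ιMulti R p v) := by
    rw [altLift]
    simp only [LinearMap.comp_apply, Submodule.coe_subtype]
    rw [tP2E_tprod_coe]
  rw [this, ExteriorAlgebra.liftAlternating_apply_ιMulti, Function.update_self]

theorem tP2E_surjective (z : (⋀[R]^p M : Submodule R _)) :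
    ∃ u : ⨂[R]^p M, tensorPowerToExteriorPower R M p u = z := by
  have hz : (z : ExteriorAlgebra R M) ∈
      Submodule.span R (Set.range (ExteriorAlgebra.ιMulti R p)) := by
    rw [ExteriorAlgebra.ιMulti_span_fixedDegree]; exact z.2
  have key : ∀ w ∈ Submodule.span R (Set.range (ExteriorAlgebra.ιMulti R p)),
      ∃ u : ⨂[R]^p M,
        PiTensorProduct.lift (ExteriorAlgebra.ιMulti R p).toMultilinearMap u = w := by
    intro w hw
    induction hw using Submodule.span_induction with
    | mem w hwmem =>
        obtain ⟨v, rfl⟩ := hwmem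
        exact ⟨tprod R v, by rw [PiTensorProduct.lift.tprod]; rfl⟩
    | zero => exact ⟨0, by simp⟩
    | add w w' _ _ hw hw' =>
        obtain ⟨u, hu⟩ := hw; obtain ⟨u', hu'⟩ := hw'
        exact ⟨u + u', by rw [map_add, hu, hu']⟩
    | smul c w _ hw =>
        obtain ⟨u, hu⟩ := hw
        exact ⟨c • u, by rw [map_smul, hu]⟩
  obtain ⟨u, hu⟩ := key _ hz
  exact ⟨u, Subtype.ext (by rw [tP2E_coe, hu])⟩

theorem ext_exteriorPower {φ ψ : (⋀[R]^p M : Submodule R _) →ₗ[R] T}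
    (h : ∀ v : Fin p → M,
      φ (tensorPowerToExteriorPower R M p (tprod R v)) =
        ψ (tensorPowerToExteriorPower R M p (tprod R v))) : φ = ψ := by
  have hcomp : φ ∘ₗ tensorPowerToExteriorPower R M p =
      ψ ∘ₗ tensorPowerToExteriorPower R M p := by
    apply PiTensorProduct.ext
    apply MultilinearMap.ext
    intro v
    simpa using h v
  apply LinearMap.ext
  intro z
  obtain ⟨u, rfl⟩ := tP2E_surjective z
  exact LinearMap.congr_fun hcomp u

theorem ιMulti_eq_zero_pair : ∀ {p : ℕ} {i j : Fin p}, i ≠ j → ∀ (v : Fin p → M),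
    ExteriorAlgebra.ι R (v i) * ExteriorAlgebra.ι R (v j) = 0 →
    ExteriorAlgebra.ιMulti R p v = 0 := by
  classical
  intro p
  match p with
  | 0 => exact fun {i j} _ _ _ => i.elim0
  | 1 => exact fun {i j} hij _ _ => absurd (Subsingleton.elim i j) hij
  | (q+2) => ?_
  intro i j hij v h
  have h01 : (0 : Fin (q+2)) ≠ 1 := Fin.ne_of_val_ne (by norm_num)
  set τ : Equiv.Perm (Fin (q+2)) := Equiv.swap 0 i with hτ
  have hτj : τ (τ j) = j := Equiv.swap_apply_self _ _ _
  have hj' : τ j ≠ 0 := by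
    intro h0
    apply hij
    have h1 : τ (τ j) = τ 0 := congrArg τ h0
    rw [hτj, hτ, Equiv.swap_apply_left] at h1
    exact h1.symm
  set σ : Equiv.Perm (Fin (q+2)) := (Equiv.swap 1 (τ j)).trans τ with hσ
  have hσ0 : σ 0 = i := by
    rw [hσ]
    simp only [Equiv.trans_apply]
    rw [Equiv.swap_apply_of_ne_of_ne h01 (Ne.symm hj'), hτ, Equiv.swap_apply_left]
  have hσ1 : σ 1 = j := by
    rw [hσ]
    simp only [Equiv.trans_apply]
    rw [Equiv.swap_apply_left, hτj]
  have hperm := (ExteriorAlgebra.ιMulti R (q+2)).map_perm v σ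
  have hvσ : ExteriorAlgebra.ιMulti R (q+2) (v ∘ σ) = 0 := by
    rw [ExteriorAlgebra.ιMulti_apply, List.ofFn_succ, List.ofFn_succ,
      List.prod_cons, List.prod_cons, ← mul_assoc]
    simp only [Function.comp_apply]
    rw [show ((0 : Fin (q+1)).succ : Fin (q+2)) = 1 from Fin.succ_zero_eq_one]
    rw [hσ0, hσ1, h, zero_mul]
  rw [hperm] at hvσ
  rcases Int.units_eq_one_or (Equiv.Perm.sign σ) with hs | hs <;> rw [hs] at hvσ
  · simpa using hvσ
  · simpa [Units.smul_def, neg_eq_zero] using hvσ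

end ExtHelpers

end Statement18Aux

namespace Statement18Aux

variable {R : Type*} [CommRing R] {L : Type*} [AddCommGroup L] [Module R L]
variable {N : Type*} [AddCommGroup N] [Module R N] {p : ℕ}

theorem iota_pair_zero (hΛ : (⋀[R]^2 L : Submodule R (ExteriorAlgebra R L)) = ⊥)
    (a b : L) (m : N) :
    ExteriorAlgebra.ι R (a ⊗ₜ[R] m) * ExteriorAlgebra.ι R (b ⊗ₜ[R] m) = 0 := by
  have := alt_bilin_zero hΛ
    (LinearMap.mk₂ R
      (fun a b => ExteriorAlgebra.ι R (a ⊗ₜ[R] m) * ExteriorAlgebra.ι R (b ⊗ₜ[R] m)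
        : L → L → ExteriorAlgebra R (L ⊗[R] N))
      (fun x x' y => by
        rw [TensorProduct.add_tmul, map_add, add_mul])
      (fun c x y => by
        rw [← TensorProduct.smul_tmul', map_smul, smul_mul_assoc])
      (fun x y y' => by
        rw [TensorProduct.add_tmul, map_add, mul_add])
      (fun c x y => by
        rw [← TensorProduct.smul_tmul', map_smul, mul_smul_comm]))
    (fun x => by
      dsimp only [LinearMap.mk₂_apply]
      exact ExteriorAlgebra.ι_sq_zero _) a b
  simpa using this

theorem forward_vanish (hΛ : (⋀[R]^2 L : Submodule R (ExteriorAlgebra R L)) = ⊥)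
    (x : ⨂[R]^p L) (n : Fin p → N) {i j : Fin p} (hij : i ≠ j) (hn : n i = n j) :
    tensorPowerToExteriorPower R (L ⊗[R] N) p
      (PiTensorProduct.map₂ (fun _ => TensorProduct.mk R L N) x (tprod R n)) = 0 := by
  induction x using PiTensorProduct.induction_on with
  | smul_tprod r f =>
      rw [map_smul, LinearMap.smul_apply, PiTensorProduct.map₂_tprod_tprod]
      have hz : ExteriorAlgebra.ιMulti R p (fun k => f k ⊗ₜ[R] n k) = 0 := by
        apply ιMulti_eq_zero_pair hij
        rw [show n j = n i from hn.symm]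
        exact iota_pair_zero hΛ (f i) (f j) (n i)
      have : tensorPowerToExteriorPower R (L ⊗[R] N) p
          (tprod R (fun k => f k ⊗ₜ[R] n k)) = 0 := by
        apply Subtype.ext
        rw [tP2E_tprod_coe, hz]
        rfl
      rw [map_smul]
      simp only [TensorProduct.mk_apply]
      rw [this, smul_zero]
  | add u v hu hv =>
      rw [LinearMap.map_add, LinearMap.add_apply, map_add, hu, hv, add_zero]

end Statement18Aux

namespace Statement18Aux

variable {R : Type*} [CommRing R] {L : Type*} [AddCommGroup L] [Module R L]
variable {N : Type*} [AddCommGroup N] [Module R N] {p : ℕ}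

/-- The alternating map underlying the forward map of part (c). -/
noncomputable def Ax (hΛ : (⋀[R]^2 L : Submodule R (ExteriorAlgebra R L)) = ⊥)
    (x : ⨂[R]^p L) : N [⋀^Fin p]→ₗ[R] ((⋀[R]^p (L ⊗[R] N)) : Submodule R _) where
  toMultilinearMap :=
    ((tensorPowerToExteriorPower R (L ⊗[R] N) p) ∘ₗ
      (PiTensorProduct.map₂ (fun _ => TensorProduct.mk R L N) x)).compMultilinearMap
        (tprod R)
  map_eq_zero_of_eq' v i j hv hij := by
    simpa using forward_vanish hΛ x v hij hv

theorem Ax_apply (hΛ : (⋀[R]^2 L : Submodule R (ExteriorAlgebra R L)) = ⊥)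
    (x : ⨂[R]^p L) (n : Fin p → N) :
    Ax hΛ x n = tensorPowerToExteriorPower R (L ⊗[R] N) p
      (PiTensorProduct.map₂ (fun _ => TensorProduct.mk R L N) x (tprod R n)) := rfl

/-- The forward map of part (c), as a bilinear map. -/
noncomputable def Bc (hΛ : (⋀[R]^2 L : Submodule R (ExteriorAlgebra R L)) = ⊥) :
    (⨂[R]^p L) →ₗ[R]
      ((⋀[R]^p N : Submodule R _) →ₗ[R] ((⋀[R]^p (L ⊗[R] N)) : Submodule R _)) where
  toFun x := altLift (Ax hΛ x)
  map_add' x y := by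
    apply ext_exteriorPower
    intro n
    rw [LinearMap.add_apply, altLift_tP2E_tprod, altLift_tP2E_tprod, altLift_tP2E_tprod,
      Ax_apply, Ax_apply, Ax_apply, map_add, LinearMap.add_apply, map_add]
  map_smul' c x := by
    apply ext_exteriorPower
    intro n
    rw [RingHom.id_apply, LinearMap.smul_apply, altLift_tP2E_tprod, altLift_tP2E_tprod,
      Ax_apply, Ax_apply, map_smul, LinearMap.smul_apply, map_smul]

theorem Bc_tP2E (hΛ : (⋀[R]^2 L : Submodule R (ExteriorAlgebra R L)) = ⊥)
    (x : ⨂[R]^p L) (t : ⨂[R]^p N) :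
    Bc hΛ x (tensorPowerToExteriorPower R N p t) =
      tensorPowerToExteriorPower R (L ⊗[R] N) p
        (PiTensorProduct.map₂ (fun _ => TensorProduct.mk R L N) x t) := by
  have h : (Bc hΛ x) ∘ₗ tensorPowerToExteriorPower R N p =
      (tensorPowerToExteriorPower R (L ⊗[R] N) p) ∘ₗ
        (PiTensorProduct.map₂ (fun _ => TensorProduct.mk R L N) x) := by
    apply PiTensorProduct.ext
    apply MultilinearMap.ext
    intro n
    simp only [LinearMap.compMultilinearMap_apply, LinearMap.comp_apply]
    rw [show (Bc hΛ x : (⋀[R]^p N : Submodule R _) →ₗ[R] _) = altLift (Ax hΛ x) from rfl,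
      altLift_tP2E_tprod, Ax_apply]
  exact LinearMap.congr_fun h t

/-- The backward linear map of part (c), before restriction to the exterior power. -/
noncomputable def thetaLin (R : Type*) [CommRing R] (L N : Type*) [AddCommGroup L]
    [Module R L] [AddCommGroup N] [Module R N] (p : ℕ) :
    (⨂[R]^p (L ⊗[R] N)) →ₗ[R] ((⨂[R]^p L) ⊗[R] ((⋀[R]^p N : Submodule R _))) :=
  (LinearMap.lTensor (⨂[R]^p L) (tensorPowerToExteriorPower R N p)) ∘ₗ
    (distrib R L N p).1.symm.toLinearMap

theorem thetaLin_pure (f : Fin p → L) (n : Fin p → N) :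
    thetaLin R L N p (tprod R (fun k => f k ⊗ₜ[R] n k)) =
      tprod R f ⊗ₜ[R] tensorPowerToExteriorPower R N p (tprod R n) := by
  rw [thetaLin]
  simp only [LinearMap.comp_apply, LinearEquiv.coe_coe]
  rw [show (distrib R L N p).1.symm (tprod R (fun k => f k ⊗ₜ[R] n k)) =
      tprod R f ⊗ₜ[R] tprod R n by
    rw [LinearEquiv.symm_apply_eq, (distrib R L N p).2]]
  rw [LinearMap.lTensor_tmul]

theorem tP2E_reindex_swap {M : Type*} [AddCommGroup M] [Module R M]
    {i j : Fin p} (hij : i ≠ j) :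
    (tensorPowerToExteriorPower R M p) ∘ₗ
        (PiTensorProduct.reindex R (fun _ => M) (Equiv.swap i j)).toLinearMap =
      - tensorPowerToExteriorPower R M p := by
  classical
  apply PiTensorProduct.ext
  apply MultilinearMap.ext
  intro v
  simp only [LinearMap.compMultilinearMap_apply, LinearMap.comp_apply,
    LinearEquiv.coe_coe, LinearMap.neg_apply]
  rw [PiTensorProduct.reindex_tprod]
  apply Subtype.ext
  rw [Submodule.coe_neg, tP2E_tprod_coe, tP2E_tprod_coe]
  rw [show (fun k => v ((Equiv.swap i j).symm k)) = v ∘ (Equiv.swap i j) by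
    funext k; rw [Equiv.symm_swap]; rfl]
  exact AlternatingMap.map_swap _ v hij

theorem thetaLin_reindex_swap (hΛ : (⋀[R]^2 L : Submodule R (ExteriorAlgebra R L)) = ⊥)
    {i j : Fin p} (hij : i ≠ j) (z : ⨂[R]^p (L ⊗[R] N)) :
    thetaLin R L N p (PiTensorProduct.reindex R (fun _ => L ⊗[R] N) (Equiv.swap i j) z) =
      - thetaLin R L N p z := by
  rw [thetaLin]
  simp only [LinearMap.comp_apply, LinearEquiv.coe_coe]
  rw [distrib_symm_reindex hΛ]
  have hpt : ∀ t : ⨂[R]^p N,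
      tensorPowerToExteriorPower R N p
        (PiTensorProduct.reindex R (fun _ => N) (Equiv.swap i j) t) =
      - tensorPowerToExteriorPower R N p t := by
    intro t
    have := LinearMap.congr_fun (tP2E_reindex_swap (M := N) hij) t
    simpa using this
  have hmaps : ∀ w : (⨂[R]^p L) ⊗[R] (⨂[R]^p N),
      (LinearMap.lTensor (⨂[R]^p L) (tensorPowerToExteriorPower R N p))
        (TensorProduct.map LinearMap.id
          (PiTensorProduct.reindex R (fun _ => N) (Equiv.swap i j)).toLinearMap w) =
      - (LinearMap.lTensor (⨂[R]^p L) (tensorPowerToExteriorPower R N p)) w := by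
    intro w
    induction w using TensorProduct.induction_on with
    | zero => simp
    | tmul x t =>
        rw [TensorProduct.map_tmul, LinearMap.lTensor_tmul, LinearMap.lTensor_tmul]
        simp only [LinearMap.id_coe, id_eq, LinearEquiv.coe_coe]
        rw [hpt, TensorProduct.tmul_neg]
    | add w w' hw hw' =>
        rw [map_add, map_add, hw, hw', map_add]
        abel

  rw [hmaps]

end Statement18Aux

namespace Statement18Aux

variable {R : Type*} [CommRing R] {L : Type*} [AddCommGroup L] [Module R L]
variable {N : Type*} [AddCommGroup N] [Module R N] {p : ℕ}

theorem theta_pure_slots {i j : Fin p} (hij : i ≠ j) (a : L) (m : N) :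
    ∀ (k : ℕ) (w : Fin p → L ⊗[R] N), w i = a ⊗ₜ[R] m → w j = a ⊗ₜ[R] m →
      (∀ l : Fin p, l ≠ i → l ≠ j → k ≤ (l : ℕ) → ∃ c : L × N, w l = c.1 ⊗ₜ[R] c.2) →
      thetaLin R L N p (tprod R w) = 0 := by
  classical
  intro k
  induction k with
  | zero =>
      intro w hi hj hpure
      have hch : ∀ l : Fin p, ∃ c : L × N,
          w l = c.1 ⊗ₜ[R] c.2 ∧ ((l = i ∨ l = j) → c = (a, m)) := by
        intro l
        by_cases h : l = i ∨ l = j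
        · refine ⟨(a, m), ?_, fun _ => rfl⟩
          rcases h with rfl | rfl
          · exact hi
          · exact hj
        · push_neg at h
          obtain ⟨c, hc⟩ := hpure l h.1 h.2 (Nat.zero_le _)
          exact ⟨c, hc, fun hl => absurd hl (by push_neg; exact h)⟩
      choose c hc1 hc2 using hch
      have hw : w = fun l => (c l).1 ⊗ₜ[R] (c l).2 := funext fun l => hc1 l
      have hnij : (fun l => (c l).2) i = (fun l => (c l).2) j := by
        simp only
        rw [hc2 i (Or.inl rfl), hc2 j (Or.inr rfl)]
      rw [hw, thetaLin_pure]
      have hz : tensorPowerToExteriorPower R N p (tprod R (fun l => (c l).2)) = 0 := by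
        apply Subtype.ext
        rw [tP2E_tprod_coe]
        rw [(ExteriorAlgebra.ιMulti R p).map_eq_zero_of_eq (fun l => (c l).2) hnij hij]
        rfl
      rw [hz, TensorProduct.tmul_zero]
  | succ k ih =>
      intro w hi hj hpure
      by_cases hk : k < p
      · set l₀ : Fin p := ⟨k, hk⟩ with hl₀def
        by_cases hl₀ : l₀ = i ∨ l₀ = j
        · apply ih w hi hj
          intro l hli hlj hkl
          apply hpure l hli hlj
          have hne : l ≠ l₀ := by
            rcases hl₀ with rfl | rfl
            · exact hli
            · exact hlj
          have : (l : ℕ) ≠ k := fun hh => hne (Fin.ext hh)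
          omega
        · push_neg at hl₀
          have hi' : i ≠ l₀ := fun h => hl₀.1 h.symm
          have hj' : j ≠ l₀ := fun h => hl₀.2 h.symm
          have hgen : ∀ c : L ⊗[R] N,
              thetaLin R L N p (tprod R (Function.update w l₀ c)) = 0 := by
            intro c
            induction c using TensorProduct.induction_on with
            | zero =>
                rw [MultilinearMap.map_coord_zero _ l₀ (Function.update_self _ _ _), map_zero]
            | tmul b y =>
                apply ih
                · rw [Function.update_of_ne hi']; exact hi
                · rw [Function.update_of_ne hj']; exact hj
                · intro l hli hlj hkl
                  rcases eq_or_ne l l₀ with rfl | hne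
                  · exact ⟨(b, y), by rw [Function.update_self]⟩
                  · rw [Function.update_of_ne hne]
                    apply hpure l hli hlj
                    have : (l : ℕ) ≠ k := fun hh => hne (Fin.ext hh)
                    omega
            | add c c' hc hc' =>
                rw [MultilinearMap.map_update_add, map_add, hc, hc', add_zero]
          have := hgen (w l₀)
          rwa [Function.update_eq_self] at this
      · apply ih w hi hj
        intro l hli hlj hkl
        have := l.isLt
        omega

theorem theta_alternating (hΛ : (⋀[R]^2 L : Submodule R (ExteriorAlgebra R L)) = ⊥)
    (v : Fin p → L ⊗[R] N) (i j : Fin p) (hv : v i = v j) (hij : i ≠ j) :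
    thetaLin R L N p (tprod R v) = 0 := by
  classical
  have hswap : ∀ u u' : L ⊗[R] N,
      thetaLin R L N p (tprod R (Function.update (Function.update v i u') j u)) =
        - thetaLin R L N p (tprod R (Function.update (Function.update v i u) j u')) := by
    intro u u'
    have hcomp : (Function.update (Function.update v i u) j u') ∘ (Equiv.swap i j) =
        Function.update (Function.update v i u') j u := by
      funext k
      rcases eq_or_ne k i with rfl | hki
      · rw [Function.comp_apply, Equiv.swap_apply_left, Function.update_self,
          Function.update_of_ne hij, Function.update_self]
      · rcases eq_or_ne k j with rfl | hkj
        · rw [Function.comp_apply, Equiv.swap_apply_right, Function.update_of_ne hij,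
            Function.update_self, Function.update_self]
        · rw [Function.comp_apply, Equiv.swap_apply_of_ne_of_ne hki hkj,
            Function.update_of_ne hkj, Function.update_of_ne hki,
            Function.update_of_ne hkj, Function.update_of_ne hki]
    have h1 : tprod R (Function.update (Function.update v i u') j u) =
        PiTensorProduct.reindex R (fun _ => L ⊗[R] N) (Equiv.swap i j)
          (tprod R (Function.update (Function.update v i u) j u')) := by
      rw [PiTensorProduct.reindex_tprod, ← hcomp]
      congr 1
    rw [h1, thetaLin_reindex_swap hΛ hij]
  have hgen : ∀ u : L ⊗[R] N,
      thetaLin R L N p (tprod R (Function.update (Function.update v i u) j u)) = 0 := by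
    intro u
    induction u using TensorProduct.induction_on with
    | zero =>
        rw [MultilinearMap.map_coord_zero _ j (Function.update_self _ _ _), map_zero]
    | tmul a m =>
        apply theta_pure_slots hij a m p
        · rw [Function.update_of_ne hij, Function.update_self]
        · rw [Function.update_self]
        · intro l _ _ hkl
          have := l.isLt
          omega
    | add u u' hu hu' =>
        have e1 : tprod R (Function.update (Function.update v i (u + u')) j (u + u')) =
            tprod R (Function.update (Function.update v i (u + u')) j u) +
              tprod R (Function.update (Function.update v i (u + u')) j u') :=
          MultilinearMap.map_update_add _ _ _ _ _
        have e2 : ∀ y : L ⊗[R] N,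
            tprod R (Function.update (Function.update v i (u + u')) j y) =
              tprod R (Function.update (Function.update v i u) j y) +
                tprod R (Function.update (Function.update v i u') j y) := by
          intro y
          rw [Function.update_comm hij (u + u') y v, MultilinearMap.map_update_add,
            ← Function.update_comm hij u y v, ← Function.update_comm hij u' y v]
        rw [e1, e2 u, e2 u', map_add, map_add, map_add, hu, hu', hswap u u']
        abel
  have hv' : Function.update (Function.update v i (v i)) j (v i) = v := by
    funext k
    rcases eq_or_ne k j with rfl | hkj
    · rw [Function.update_self]; exact hv
    · rw [Function.update_of_ne hkj]
      rcases eq_or_ne k i with rfl | hki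
      · rw [Function.update_self]
      · rw [Function.update_of_ne hki]
  have := hgen (v i)
  rwa [hv'] at this

end Statement18Aux

namespace Statement18Aux

variable {R : Type*} [CommRing R] {L : Type*} [AddCommGroup L] [Module R L]

theorem part_c (hΛ : (⋀[R]^2 L : Submodule R (ExteriorAlgebra R L)) = ⊥)
    (N : Type*) [AddCommGroup N] [Module R N] (p : ℕ) :
    ∃ e : ((⨂[R]^p L) ⊗[R] ((⋀[R]^p N : Submodule R _))) ≃ₗ[R]
        ((⋀[R]^p (L ⊗[R] N) : Submodule R _)),
      ∀ (x : ⨂[R]^p L) (t : ⨂[R]^p N),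
        e (x ⊗ₜ[R] tensorPowerToExteriorPower R N p t) =
          tensorPowerToExteriorPower R (L ⊗[R] N) p
            (PiTensorProduct.map₂ (fun _ => TensorProduct.mk R L N) x t) := by
  classical
  set Fc := TensorProduct.lift (Bc (N := N) (p := p) hΛ) with hFc
  have hFc_apply : ∀ (x : ⨂[R]^p L) (t : ⨂[R]^p N),
      Fc (x ⊗ₜ[R] tensorPowerToExteriorPower R N p t) =
        tensorPowerToExteriorPower R (L ⊗[R] N) p
          (PiTensorProduct.map₂ (fun _ => TensorProduct.mk R L N) x t) := by
    intro x t
    rw [hFc, TensorProduct.lift.tmul]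
    exact Bc_tP2E hΛ x t
  set Θa : (L ⊗[R] N) [⋀^Fin p]→ₗ[R] ((⨂[R]^p L) ⊗[R] ((⋀[R]^p N : Submodule R _))) :=
    { toMultilinearMap := (thetaLin R L N p).compMultilinearMap (tprod R)
      map_eq_zero_of_eq' := fun v i j hv hij => by
        simpa using theta_alternating hΛ v i j hv hij } with hΘa
  set Gc := altLift (R := R) (M := L ⊗[R] N)
    (T := (⨂[R]^p L) ⊗[R] ((⋀[R]^p N : Submodule R _))) (p := p) Θa with hGc
  have hGc_tP2E : ∀ u : ⨂[R]^p (L ⊗[R] N),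
      Gc (tensorPowerToExteriorPower R (L ⊗[R] N) p u) = thetaLin R L N p u := by
    have h : Gc ∘ₗ tensorPowerToExteriorPower R (L ⊗[R] N) p = thetaLin R L N p := by
      apply PiTensorProduct.ext
      apply MultilinearMap.ext
      intro v
      simp only [LinearMap.compMultilinearMap_apply, LinearMap.comp_apply]
      rw [hGc, altLift_tP2E_tprod]
      rfl
    exact fun u => LinearMap.congr_fun h u
  have hmap₂ := map₂_eq_distrib R L N p
  have hth : ∀ u : ⨂[R]^p (L ⊗[R] N), thetaLin R L N p u =
      (LinearMap.lTensor (⨂[R]^p L) (tensorPowerToExteriorPower R N p))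
        ((distrib R L N p).1.symm u) := by
    intro u
    rw [thetaLin]
    simp only [LinearMap.comp_apply, LinearEquiv.coe_coe]
  have h₁ : Fc ∘ₗ Gc = LinearMap.id := by
    have hkey : Fc ∘ₗ (LinearMap.lTensor (⨂[R]^p L) (tensorPowerToExteriorPower R N p)) =
        (tensorPowerToExteriorPower R (L ⊗[R] N) p) ∘ₗ (distrib R L N p).1.toLinearMap := by
      apply tensor_pipi_ext
      intro f n
      simp only [LinearMap.comp_apply, LinearMap.lTensor_tmul, LinearEquiv.coe_coe]
      rw [hFc_apply, hmap₂]
    apply LinearMap.ext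
    intro z
    obtain ⟨u, rfl⟩ := tP2E_surjective z
    simp only [LinearMap.comp_apply, LinearMap.id_apply]
    rw [hGc_tP2E, hth]
    have := LinearMap.congr_fun hkey ((distrib R L N p).1.symm u)
    simp only [LinearMap.comp_apply, LinearEquiv.coe_coe] at this
    rw [this, LinearEquiv.apply_symm_apply]
  have h₂ : Gc ∘ₗ Fc = LinearMap.id := by
    apply TensorProduct.ext'
    intro x ξ
    obtain ⟨t, rfl⟩ := tP2E_surjective ξ
    simp only [LinearMap.comp_apply, LinearMap.id_apply]
    rw [hFc_apply, hGc_tP2E, hmap₂, hth]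
    rw [LinearEquiv.symm_apply_apply, LinearMap.lTensor_tmul]
  exact ⟨LinearEquiv.ofLinear Fc Gc h₁ h₂, hFc_apply⟩

end Statement18Aux


/-- Let `R` be a commutative ring and `L` a flat `R`-module with
`Λ² L = 0`.  Then for every `p > 0`:
(a) every permutation `σ ∈ S_p` acts as the identity on `L^{⊗p}`;
(b) for every `R`-module `N`, the reordering map
`L^{⊗p} ⊗ N^{⊗p} → (L ⊗ N)^{⊗p}` followed by the projection onto `Sym^p(L ⊗ N)`
descends to an isomorphism `L^{⊗p} ⊗ Sym^p(N) ≅ Sym^p(L ⊗ N)`;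
(c) likewise it descends to an isomorphism `L^{⊗p} ⊗ Λ^p(N) ≅ Λ^p(L ⊗ N)`. -/
theorem tensorPower_flat_vanishing_exterior_square
    (R : Type*) [CommRing R] (L : Type*) [AddCommGroup L] [Module R L]
    (hL : Module.Flat R L) (hΛ : (⋀[R]^2 L : Submodule R (ExteriorAlgebra R L)) = ⊥)
    (p : ℕ) (hp : 0 < p) :
    (∀ (σ : Equiv.Perm (Fin p)) (x : ⨂[R]^p L),
      PiTensorProduct.reindex R (fun _ => L) σ x = x) ∧
    (∀ (N : Type*) [AddCommGroup N] [Module R N],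
      ∃ e : ((⨂[R]^p L) ⊗[R] ((⨂[R]^p N) ⧸ symRelations R N p)) ≃ₗ[R]
          ((⨂[R]^p (L ⊗[R] N)) ⧸ symRelations R (L ⊗[R] N) p),
        ∀ (x : ⨂[R]^p L) (t : ⨂[R]^p N),
          e (x ⊗ₜ[R] Submodule.Quotient.mk t) =
            Submodule.Quotient.mk
              (PiTensorProduct.map₂ (fun _ => TensorProduct.mk R L N) x t)) ∧
    (∀ (N : Type*) [AddCommGroup N] [Module R N],
      ∃ e : ((⨂[R]^p L) ⊗[R] (⋀[R]^p N)) ≃ₗ[R] (⋀[R]^p (L ⊗[R] N)),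
        ∀ (x : ⨂[R]^p L) (t : ⨂[R]^p N),
          e (x ⊗ₜ[R] tensorPowerToExteriorPower R N p t) =
            tensorPowerToExteriorPower R (L ⊗[R] N) p
              (PiTensorProduct.map₂ (fun _ => TensorProduct.mk R L N) x t)) := by
  refine ⟨Statement18Aux.reindex_perm_id hΛ,
    fun N _ _ => Statement18Aux.part_b hΛ N p,
    fun N _ _ => Statement18Aux.part_c hΛ N p⟩
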